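/- Let p be a prime and n ≥ 2 an integer. Consider the p + 1 vectors in F_p^n consisting of v_i = (1, i, i², …, i^{n−1}) for i = 0, 1, …, p−1, together with v_∞ = (0, …, 0, 1). These vectors are n-wise linearly independent over F_p: any n distinct vectors among them are linearly independent over the field with p elements. -/

import Mathlib

noncomputable section

/-- The `p+1` vectors of `F_p^n`: `v_i = (1, i, i², …, i^{n-1})` for `0 ≤ i < p`,
and `v_∞ = (0, …, 0, 1)` for the last index. -/
def momentVec (p n : ℕ) (i : Fin (p + 1)) : Fin n → ZMod p :=
  if (i : ℕ) < p then fun j => ((i : ℕ) : ZMod p) ^ (j : ℕ)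
  else fun j => if (j : ℕ) = n - 1 then 1 else 0

lemma natCast_zmod_inj {p : ℕ} (hp : 0 < p) {a b : ℕ} (ha : a < p) (hb : b < p)
    (h : (a : ZMod p) = (b : ZMod p)) : a = b := by
  haveI : NeZero p := ⟨hp.ne'⟩
  rw [← ZMod.val_cast_of_lt ha, ← ZMod.val_cast_of_lt hb, h]

/-- For a prime `p`, the vectors `v_0, …, v_{p-1}, v_∞` of `F_p^n`
are `n`-wise linearly independent: any `n` distinct ones among them are linearly
independent over `F_p`. -/
theorem momentVec_n_wise_linearIndependent (p n : ℕ) (hp : p.Prime) (hn : 2 ≤ n) :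
    ∀ T : Finset (Fin (p + 1)), T.card = n →
      LinearIndependent (ZMod p)
        (fun t : (T : Set (Fin (p + 1))) => momentVec p n t) := by
  haveI : Fact p.Prime := ⟨hp⟩
  have hp0 : 0 < p := hp.pos
  intro T hT
  obtain ⟨m, rfl⟩ : ∃ m, n = m + 1 := ⟨n - 1, by omega⟩
  have heq : ↥T ≃ ↥(T : Set (Fin (p + 1))) :=
    Equiv.subtypeEquivRight (fun x => (Finset.mem_coe).symm)
  by_cases hlast : Fin.last p ∈ T
  · -- case containing v_∞
    have hl : Fin.last p ∈ (T : Set (Fin (p + 1))) := Finset.mem_coe.mpr hlast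
    set e1 : Fin (m + 1) ≃ ↥(T : Set (Fin (p + 1))) :=
      (T.equivFinOfCardEq hT).symm.trans heq with he1
    set e : Fin (m + 1) ≃ ↥(T : Set (Fin (p + 1))) :=
      (Equiv.swap (Fin.last m) (e1.symm ⟨Fin.last p, hl⟩)).trans e1 with he
    have helast : (e (Fin.last m) : Fin (p + 1)) = Fin.last p := by
      show ((e1 ((Equiv.swap (Fin.last m) (e1.symm ⟨Fin.last p, hl⟩)) (Fin.last m)) :
        ↥(T : Set (Fin (p + 1)))) : Fin (p + 1)) = Fin.last p
      rw [Equiv.swap_apply_left, Equiv.apply_symm_apply]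
    have hlt : ∀ i : Fin (m + 1), i ≠ Fin.last m → ((e i : Fin (p + 1)) : ℕ) < p := by
      intro i hi
      have hne : (e i : Fin (p + 1)) ≠ Fin.last p := by
        intro hc
        exact hi (e.injective (Subtype.ext (by rw [hc, helast])))
      have h1 := (e i : Fin (p + 1)).isLt
      have h2 : ((e i : Fin (p + 1)) : ℕ) ≠ p := fun hc =>
        hne (Fin.ext (by rw [Fin.val_last]; exact hc))
      omega
    rw [← linearIndependent_equiv e]
    have hfe : (fun t : (T : Set (Fin (p + 1))) => momentVec p (m + 1) t) ∘ e =
        fun i => (Matrix.of fun i j => momentVec p (m + 1) (e i) j) i := rfl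
    rw [hfe]
    refine (Matrix.linearIndependent_rows_iff_isUnit
      (A := Matrix.of fun i j => momentVec p (m + 1) (e i) j)).mpr ?_
    rw [Matrix.isUnit_iff_isUnit_det, isUnit_iff_ne_zero]
    set M : Matrix (Fin (m + 1)) (Fin (m + 1)) (ZMod p) :=
      Matrix.of fun i j => momentVec p (m + 1) (e i) j with hM
    have hrow : ∀ j, M (Fin.last m) j = if j = Fin.last m then 1 else 0 := by
      intro j
      have hnl : ¬ ((e (Fin.last m) : Fin (p + 1)) : ℕ) < p := by
        rw [helast]; simp
      show momentVec p (m + 1) (e (Fin.last m)) j = _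
      rw [momentVec, if_neg hnl]
      by_cases hjm : j = Fin.last m
      · simp [hjm]
      · have hj : (j : ℕ) ≠ m := fun hc =>
          hjm (Fin.ext (by rw [Fin.val_last]; exact hc))
        simp [hj, hjm]
    have hminor : M.submatrix (Fin.last m).succAbove (Fin.last m).succAbove =
        Matrix.vandermonde (fun i : Fin m => (((e i.castSucc : Fin (p + 1)) : ℕ) : ZMod p)) := by
      ext i j
      have hi : ((e i.castSucc : Fin (p + 1)) : ℕ) < p :=
        hlt _ (Fin.castSucc_lt_last i).ne
      rw [Fin.succAbove_last]
      show momentVec p (m + 1) (e i.castSucc) j.castSucc = _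
      rw [momentVec, if_pos hi, Matrix.vandermonde_apply, Fin.coe_castSucc]
    rw [Matrix.det_succ_row M (Fin.last m)]
    rw [Finset.sum_eq_single (Fin.last m)]
    · rw [hrow, if_pos rfl, mul_one, hminor]
      have hsign : ((-1 : ZMod p) ^ ((Fin.last m : ℕ) + (Fin.last m : ℕ))) = 1 :=
        Even.neg_one_pow ⟨m, rfl⟩
      rw [hsign, one_mul]
      apply Matrix.det_vandermonde_ne_zero_iff.mpr
      intro i j hij
      have h2 := natCast_zmod_inj hp0 (hlt _ (Fin.castSucc_lt_last i).ne)
        (hlt _ (Fin.castSucc_lt_last j).ne) hij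
      exact Fin.castSucc_injective m (e.injective (Subtype.ext (Fin.ext h2)))
    · intro j _ hj
      rw [hrow, if_neg hj, mul_zero, zero_mul]
    · intro h; exact absurd (Finset.mem_univ _) h
  · -- case without v_∞
    set e : Fin (m + 1) ≃ ↥(T : Set (Fin (p + 1))) :=
      (T.equivFinOfCardEq hT).symm.trans heq with he
    have hlt : ∀ i : Fin (m + 1), ((e i : Fin (p + 1)) : ℕ) < p := by
      intro i
      have hmem : (e i : Fin (p + 1)) ∈ T := (e i).2
      have hne : (e i : Fin (p + 1)) ≠ Fin.last p := fun hc => hlast (hc ▸ hmem)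
      have h1 := (e i : Fin (p + 1)).isLt
      have h2 : ((e i : Fin (p + 1)) : ℕ) ≠ p := fun hc =>
        hne (Fin.ext (by rw [Fin.val_last]; exact hc))
      omega
    rw [← linearIndependent_equiv e]
    have hfe : (fun t : (T : Set (Fin (p + 1))) => momentVec p (m + 1) t) ∘ e =
        fun i => (Matrix.vandermonde
          (fun i : Fin (m + 1) => (((e i : Fin (p + 1)) : ℕ) : ZMod p))) i := by
      funext i
      funext j
      show momentVec p (m + 1) (e i) j = _
      rw [momentVec, if_pos (hlt i), Matrix.vandermonde_apply]
    rw [hfe]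
    refine (Matrix.linearIndependent_rows_iff_isUnit (A := Matrix.vandermonde
      (fun i : Fin (m + 1) => (((e i : Fin (p + 1)) : ℕ) : ZMod p)))).mpr ?_
    rw [Matrix.isUnit_iff_isUnit_det, isUnit_iff_ne_zero]
    apply Matrix.det_vandermonde_ne_zero_iff.mpr
    intro i j hij
    have h2 : ((e i : Fin (p + 1)) : ℕ) = ((e j : Fin (p + 1)) : ℕ) :=
      natCast_zmod_inj hp0 (hlt i) (hlt j) hij
    exact e.injective (Subtype.ext (Fin.ext h2))
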